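/- Let q be a prime power, let G be a non-empty subset of the algebraic closure of F_q invariant under the Frobenius map σ : α ↦ α^q, and let ⋄ : G × G → G be a diamond product, i.e., σ(α ⋄ β) = σ(α) ⋄ σ(β) for all α, β ∈ G. Let m, n be positive integers with 𝓕_m(q) ∪ 𝓕_n(q) ⊆ G, and suppose ⋄ satisfies weak cancellation on 𝓕_m(q) × 𝓕_n(q). If f, g ∈ F_q[x] are monic polynomials of degrees m and n with all roots in G such that f and g are irreducible over F_q and gcd(m,n) = 1, then the composed product f ⋄ g is irreducible in F_q[x]. -/

import Mathlib

open Polynomial IntermediateField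

/-- `Fcal q m` is the set `𝓕_m(q)` of elements of (an extension of) `𝔽_q` that
generate `𝔽_{q^m}` over `𝔽_q`: elements fixed by the `m`-th power of the `q`-Frobenius
and such that every power of the Frobenius fixing them is a multiple of `m`. -/
def Fcal (q m : ℕ) {K : Type*} [Monoid K] : Set K :=
  {α | α ^ q ^ m = α ∧ ∀ l : ℕ, 0 < l → α ^ q ^ l = α → m ∣ l}

section Aux

variable {F : Type*} [Field F] [Fintype F] {q : ℕ}

private lemma pow_pow_q {K : Type*} [Monoid K] (q a b : ℕ) (x : K) :
    (x ^ q ^ a) ^ q ^ b = x ^ q ^ (a + b) := by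
  rw [← pow_mul, ← pow_add]

private lemma frob_inj (hq : Fintype.card F = q) (j : ℕ)
    {x y : AlgebraicClosure F} (hxy : x ^ q ^ j = y ^ q ^ j) : x = y := by
  set p := ringChar F with hpdef
  haveI : CharP F p := ringChar.charP F
  haveI hp : Fact p.Prime := ⟨CharP.char_is_prime F p⟩
  haveI : CharP (AlgebraicClosure F) p :=
    charP_of_injective_algebraMap (algebraMap F (AlgebraicClosure F)).injective p
  obtain ⟨e, hpe, hqe⟩ := FiniteField.card F p
  rw [hq] at hqe
  rw [hqe, ← pow_mul] at hxy
  have hkey : (x - y) ^ p ^ ((e : ℕ) * j) = 0 := by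
    rw [sub_pow_char_pow, hxy, sub_self]
  have := pow_eq_zero_iff (n := p ^ ((e : ℕ) * j)) (Nat.pos_of_ne_zero ?_).ne' |>.mp hkey
  · exact sub_eq_zero.mp this
  · exact (Nat.pow_pos hp.out.pos).ne'

private lemma deg_le_of_fixed (hq : Fintype.card F = q) {α : AlgebraicClosure F}
    (hα : IsIntegral F α) {j : ℕ} (hj : 0 < j) (hfix : α ^ q ^ j = α) :
    (minpoly F α).natDegree ≤ j := by
  classical
  set p := ringChar F with hpdef
  haveI : CharP F p := ringChar.charP F
  haveI hp : Fact p.Prime := ⟨CharP.char_is_prime F p⟩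
  haveI : CharP (AlgebraicClosure F) p :=
    charP_of_injective_algebraMap (algebraMap F (AlgebraicClosure F)).injective p
  obtain ⟨e, hpe, hqe⟩ := FiniteField.card F p
  rw [hq] at hqe
  have hqj : q ^ j = p ^ ((e : ℕ) * j) := by rw [hqe, ← pow_mul]
  have hq0 : q ≠ 0 := by rw [← hq]; exact Fintype.card_ne_zero
  -- the subalgebra of elements fixed by the `j`-th power of the `q`-Frobenius
  let E : Subalgebra F (AlgebraicClosure F) :=
    { carrier := {x | x ^ q ^ j = x}
      mul_mem' := fun {a b} ha hb => by
        simp only [Set.mem_setOf_eq] at ha hb ⊢; rw [mul_pow, ha, hb]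
      one_mem' := one_pow _
      add_mem' := fun {a b} ha hb => by
        simp only [Set.mem_setOf_eq] at ha hb ⊢
        rw [hqj, add_pow_char_pow, ← hqj, ha, hb]
      zero_mem' := by
        simp only [Set.mem_setOf_eq]
        exact zero_pow (pow_ne_zero _ hq0)
      algebraMap_mem' := fun c => by
        simp only [Set.mem_setOf_eq]
        rw [← map_pow]
        congr 1
        rw [← hq]
        exact FiniteField.pow_card_pow j c }
  have hadj : Algebra.adjoin F {α} ≤ E := Algebra.adjoin_le (Set.singleton_subset_iff.2 hfix)
  haveI := IntermediateField.adjoin.finiteDimensional hα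
  haveI : Fintype (F⟮α⟯ : IntermediateField F (AlgebraicClosure F)) :=
    Module.fintypeOfFintype (Module.finBasis F F⟮α⟯)
  have hcard : Fintype.card F⟮α⟯ = q ^ (minpoly F α).natDegree := by
    rw [Module.card_eq_pow_finrank (K := F), IntermediateField.adjoin.finrank hα, hq]
  -- all elements of `F⟮α⟯` are roots of `X ^ q ^ j - X`
  set P : (AlgebraicClosure F)[X] := X ^ q ^ j - X with hP
  have hP0 : P ≠ 0 := by
    rw [hP, hqj]
    exact FiniteField.X_pow_card_pow_sub_X_ne_zero _ (by positivity) hpe.one_lt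
  have hmem : ∀ x : F⟮α⟯, (x : AlgebraicClosure F) ∈ P.roots.toFinset := by
    intro x
    have hx : (x : AlgebraicClosure F) ∈ Algebra.adjoin F ({α} : Set (AlgebraicClosure F)) := by
      rw [← IntermediateField.adjoin_simple_toSubalgebra_of_isAlgebraic hα.isAlgebraic]
      exact x.2
    have hxE : (x : AlgebraicClosure F) ^ q ^ j = (x : AlgebraicClosure F) := hadj hx
    rw [Multiset.mem_toFinset, mem_roots hP0]
    simp [hP, IsRoot, hxE]
  have hinj : Function.Injective
      (fun x : F⟮α⟯ => (⟨(x : AlgebraicClosure F), hmem x⟩ : {y // y ∈ P.roots.toFinset})) := by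
    intro a b hab
    simp only [Subtype.mk.injEq] at hab
    exact Subtype.ext hab
  have hle : Fintype.card F⟮α⟯ ≤ P.roots.toFinset.card := by
    simpa using Fintype.card_le_of_injective _ hinj
  have hle2 : P.roots.toFinset.card ≤ q ^ j := by
    refine le_trans (Multiset.toFinset_card_le _) ?_
    calc (Multiset.card P.roots : ℕ) ≤ P.natDegree := by
          simpa using Polynomial.card_roots' P
      _ = q ^ j := by
          rw [hP, hqj]
          exact FiniteField.X_pow_card_pow_sub_X_natDegree_eq _ (by positivity) hpe.one_lt
  have hq1 : 1 < q := by rw [← hq]; exact Fintype.one_lt_card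
  have : q ^ (minpoly F α).natDegree ≤ q ^ j := by
    rw [← hcard]; exact le_trans hle hle2
  exact (Nat.pow_le_pow_iff_right hq1).mp this

private lemma pow_q_pow_deg (hq : Fintype.card F = q) {α : AlgebraicClosure F}
    (hα : IsIntegral F α) : α ^ q ^ (minpoly F α).natDegree = α := by
  haveI := IntermediateField.adjoin.finiteDimensional hα
  haveI : Fintype (F⟮α⟯ : IntermediateField F (AlgebraicClosure F)) :=
    Module.fintypeOfFintype (Module.finBasis F F⟮α⟯)
  have hcard : Fintype.card F⟮α⟯ = q ^ (minpoly F α).natDegree := by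
    rw [Module.card_eq_pow_finrank (K := F), IntermediateField.adjoin.finrank hα, hq]
  have := FiniteField.pow_card (IntermediateField.AdjoinSimple.gen F α)
  rw [hcard] at this
  have := congrArg (Subtype.val) this
  push_cast at this
  simpa [IntermediateField.AdjoinSimple.coe_gen] using this

private lemma fix_of_dvd {K : Type*} [Monoid K] {q k l : ℕ} {α : K}
    (h : α ^ q ^ k = α) (hkl : k ∣ l) : α ^ q ^ l = α := by
  obtain ⟨c, rfl⟩ := hkl
  induction c with
  | zero => simp
  | succ c ih =>
      rw [Nat.mul_succ, ← pow_pow_q, ih, h]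

private lemma mem_Fcal_of_minpoly (hq : Fintype.card F = q) {α : AlgebraicClosure F}
    (hα : IsIntegral F α) : α ∈ Fcal q (minpoly F α).natDegree := by
  set k := (minpoly F α).natDegree with hk
  have hkpos : 0 < k := minpoly.natDegree_pos hα
  refine ⟨pow_q_pow_deg hq hα, fun l hl hfix => ?_⟩
  have hr : α ^ q ^ (l % k) = α := by
    have h1 : α ^ q ^ (k * (l / k)) = α := fix_of_dvd (pow_q_pow_deg hq hα) ⟨l / k, rfl⟩
    have h2 := pow_pow_q q (k * (l / k)) (l % k) α
    rw [h1, Nat.div_add_mod l k] at h2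
    rw [h2]; exact hfix
  rcases Nat.eq_zero_or_pos (l % k) with h0 | hpos
  · exact Nat.dvd_of_mod_eq_zero h0
  · have h1 := deg_le_of_fixed hq hα hpos hr
    have h2 := Nat.mod_lt l hkpos
    omega

private lemma Fcal_shift (hq : Fintype.card F = q) {k : ℕ} {α : AlgebraicClosure F}
    (hα : α ∈ Fcal q k) (l : ℕ) : α ^ q ^ l ∈ Fcal q k := by
  obtain ⟨h1, h2⟩ := hα
  constructor
  · rw [pow_pow_q, add_comm, ← pow_pow_q, h1]
  · intro j hj hfix
    refine h2 j hj (frob_inj hq l ?_)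
    rw [pow_pow_q, add_comm, ← pow_pow_q]
    exact hfix

end Aux

/-- If `⋄` is a diamond product on a Frobenius-invariant set `G ⊇ 𝓕_m(q) ∪ 𝓕_n(q)`
satisfying weak cancellation on `𝓕_m(q) × 𝓕_n(q)`, and `f, g` are monic irreducible
polynomials over `𝔽_q` of coprime degrees `m, n` with all roots in `G`, then the
composed product `f ⋄ g` is irreducible over `𝔽_q`. -/
theorem stmt_1 {F : Type*} [Field F] [Fintype F] (q : ℕ) (hq : Fintype.card F = q)
    (G : Set (AlgebraicClosure F)) (hGne : G.Nonempty)
    (hGinv : ∀ a ∈ G, a ^ q ∈ G)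
    (d : AlgebraicClosure F → AlgebraicClosure F → AlgebraicClosure F)
    (hdG : ∀ a ∈ G, ∀ b ∈ G, d a b ∈ G)
    (hdia : ∀ a ∈ G, ∀ b ∈ G, (d a b) ^ q = d (a ^ q) (b ^ q))
    (m n : ℕ) (hm : 0 < m) (hn : 0 < n)
    (hFmG : (Fcal q m : Set (AlgebraicClosure F)) ⊆ G)
    (hFnG : (Fcal q n : Set (AlgebraicClosure F)) ⊆ G)
    (hwc₁ : ∀ α ∈ (Fcal q m : Set (AlgebraicClosure F)),
      ∀ β ∈ (Fcal q n : Set (AlgebraicClosure F)),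
      ∀ β' ∈ (Fcal q n : Set (AlgebraicClosure F)), d α β = d α β' → β = β')
    (hwc₂ : ∀ α ∈ (Fcal q m : Set (AlgebraicClosure F)),
      ∀ α' ∈ (Fcal q m : Set (AlgebraicClosure F)),
      ∀ β ∈ (Fcal q n : Set (AlgebraicClosure F)), d α β = d α' β → α = α')
    (f g : Polynomial F) (hfm : f.Monic) (hgm : g.Monic)
    (hfd : f.natDegree = m) (hgd : g.natDegree = n)
    (hfG : ∀ x ∈ (f.map (algebraMap F (AlgebraicClosure F))).roots, x ∈ G)
    (hgG : ∀ x ∈ (g.map (algebraMap F (AlgebraicClosure F))).roots, x ∈ G)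
    (hfi : Irreducible f) (hgi : Irreducible g) (hmn : Nat.Coprime m n)
    (h : Polynomial F)
    (hh : h.map (algebraMap F (AlgebraicClosure F)) =
      ((((f.map (algebraMap F (AlgebraicClosure F))).roots.bind fun α =>
          (g.map (algebraMap F (AlgebraicClosure F))).roots.map fun β => d α β).map
        fun γ => X - C γ)).prod) :
    Irreducible h := by
  classical
  set φ := algebraMap F (AlgebraicClosure F) with hφ
  have hGpow : ∀ a ∈ G, ∀ k : ℕ, a ^ q ^ k ∈ G := by
    intro a ha k
    induction k with
    | zero => simpa using ha
    | succ k ih => rw [pow_succ, pow_mul]; exact hGinv _ ih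
  have hdit : ∀ a ∈ G, ∀ b ∈ G, ∀ k : ℕ, (d a b) ^ q ^ k = d (a ^ q ^ k) (b ^ q ^ k) := by
    intro a ha b hb k
    induction k with
    | zero => simp
    | succ k ih =>
        rw [pow_succ, pow_mul, pow_mul, pow_mul, ih,
          hdia _ (hGpow a ha k) _ (hGpow b hb k)]
  -- roots of f and g lie in the corresponding Fcal sets
  have hcardf : Multiset.card (f.map φ).roots = m := by
    rw [← (IsAlgClosed.splits (f.map φ)).natDegree_eq_card_roots, natDegree_map, hfd]
  have hcardg : Multiset.card (g.map φ).roots = n := by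
    rw [← (IsAlgClosed.splits (g.map φ)).natDegree_eq_card_roots, natDegree_map, hgd]
  have hint : ∀ x : AlgebraicClosure F, IsIntegral F x := fun x =>
    (Algebra.IsAlgebraic.isAlgebraic x).isIntegral
  have hrootFm : ∀ x ∈ (f.map φ).roots, x ∈ (Fcal q m : Set (AlgebraicClosure F)) := by
    intro x hx
    have hx0 : aeval x f = 0 := by
      rw [aeval_def, ← eval_map]
      exact (mem_roots ((hfm.map φ).ne_zero)).mp hx
    have hmin : minpoly F x = f := (minpoly.eq_of_irreducible_of_monic hfi hx0 hfm).symm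
    have := mem_Fcal_of_minpoly hq (hint x)
    rwa [hmin, hfd] at this
  have hrootFn : ∀ x ∈ (g.map φ).roots, x ∈ (Fcal q n : Set (AlgebraicClosure F)) := by
    intro x hx
    have hx0 : aeval x g = 0 := by
      rw [aeval_def, ← eval_map]
      exact (mem_roots ((hgm.map φ).ne_zero)).mp hx
    have hmin : minpoly F x = g := (minpoly.eq_of_irreducible_of_monic hgi hx0 hgm).symm
    have := mem_Fcal_of_minpoly hq (hint x)
    rwa [hmin, hgd] at this
  -- core : the diamond product of generators is a generator of degree `m * n`
  have hcore : ∀ α ∈ (Fcal q m : Set (AlgebraicClosure F)),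
      ∀ β ∈ (Fcal q n : Set (AlgebraicClosure F)),
      d α β ∈ (Fcal q (m * n) : Set (AlgebraicClosure F)) := by
    intro α hαF β hβF
    have hαG : α ∈ G := hFmG hαF
    have hβG : β ∈ G := hFnG hβF
    constructor
    · rw [hdit α hαG β hβG, fix_of_dvd hαF.1 ⟨n, rfl⟩, fix_of_dvd hβF.1 ⟨m, mul_comm m n⟩]
    · intro l hl hfix
      have hγl : ∀ c : ℕ, (d α β) ^ q ^ (l * c) = d α β := fun c => fix_of_dvd hfix ⟨c, rfl⟩
      have h1 : d α (β ^ q ^ (l * m)) = d α β := by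
        have h2 := hdit α hαG β hβG (l * m)
        rw [hγl m, fix_of_dvd hαF.1 ⟨l, mul_comm l m⟩] at h2
        exact h2.symm
      have hβ' := hwc₁ α hαF _ (Fcal_shift hq hβF (l * m)) β hβF h1
      have hnl : n ∣ l :=
        Nat.Coprime.dvd_of_dvd_mul_right hmn.symm (hβF.2 _ (Nat.mul_pos hl hm) hβ')
      have h2 : d (α ^ q ^ (l * n)) β = d α β := by
        have h3 := hdit α hαG β hβG (l * n)
        rw [hγl n, fix_of_dvd hβF.1 ⟨l, mul_comm l n⟩] at h3
        exact h3.symm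
      have hα' := hwc₂ _ (Fcal_shift hq hαF (l * n)) α hαF β hβF h2
      have hml : m ∣ l :=
        Nat.Coprime.dvd_of_dvd_mul_right hmn (hαF.2 _ (Nat.mul_pos hl hn) hα')
      exact Nat.Coprime.mul_dvd_of_dvd_of_dvd hmn hml hnl
  -- pick roots
  obtain ⟨α₀, hα₀⟩ : ∃ x, x ∈ (f.map φ).roots := by
    apply Multiset.exists_mem_of_ne_zero
    intro h0
    rw [h0] at hcardf
    simp only [Multiset.card_zero] at hcardf
    omega
  obtain ⟨β₀, hβ₀⟩ : ∃ x, x ∈ (g.map φ).roots := by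
    apply Multiset.exists_mem_of_ne_zero
    intro h0
    rw [h0] at hcardg
    simp only [Multiset.card_zero] at hcardg
    omega
  have hγF : d α₀ β₀ ∈ (Fcal q (m * n) : Set (AlgebraicClosure F)) :=
    hcore α₀ (hrootFm α₀ hα₀) β₀ (hrootFn β₀ hβ₀)
  have hγint : IsIntegral F (d α₀ β₀) := hint _
  -- the minimal polynomial of γ has degree m * n
  have hmindeg : (minpoly F (d α₀ β₀)).natDegree = m * n := by
    have h1 := mem_Fcal_of_minpoly hq hγint
    refine Nat.dvd_antisymm (h1.2 (m * n) (Nat.mul_pos hm hn) hγF.1)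
      (hγF.2 _ (minpoly.natDegree_pos hγint) h1.1)
  -- h is monic of degree m * n with root γ
  have hhmapm : (h.map φ).Monic := by
    rw [hh]
    exact monic_multiset_prod_of_monic _ _ fun y _ => monic_X_sub_C y
  have hhm : h.Monic := monic_of_injective φ.injective hhmapm
  have hdeg : h.natDegree = m * n := by
    have hmap : (h.map φ).natDegree = m * n := by
      rw [hh, natDegree_multiset_prod_X_sub_C_eq_card, Multiset.card_bind]
      have hconst : ((f.map φ).roots.map
          (Multiset.card ∘ fun α => (g.map φ).roots.map fun β => d α β))
          = Multiset.replicate m n := by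
        have : (Multiset.card ∘ fun α : AlgebraicClosure F =>
            (g.map φ).roots.map fun β => d α β) = fun _ => n := by
          funext α
          simp [Function.comp, hcardg]
        rw [this, Multiset.map_const', hcardf]
      rw [hconst, Multiset.sum_replicate, smul_eq_mul]
    rw [← hmap, natDegree_map_eq_of_injective φ.injective]
  have hγmem : d α₀ β₀ ∈ ((f.map φ).roots.bind fun α =>
      (g.map φ).roots.map fun β => d α β) :=
    Multiset.mem_bind.2 ⟨α₀, hα₀, Multiset.mem_map_of_mem _ hβ₀⟩
  have haev : aeval (d α₀ β₀) h = 0 := by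
    rw [aeval_def, ← eval_map, hh, eval_multiset_prod]
    apply Multiset.prod_eq_zero
    rw [Multiset.map_map]
    exact Multiset.mem_map.2 ⟨d α₀ β₀, hγmem, by simp⟩
  have hdvd : minpoly F (d α₀ β₀) ∣ h := minpoly.dvd F _ haev
  have heq : h = minpoly F (d α₀ β₀) :=
    eq_of_monic_of_dvd_of_natDegree_le (minpoly.monic hγint) hhm hdvd
      (by rw [hdeg, hmindeg])
  rw [heq]
  exact minpoly.irreducible hγint
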